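/- Let g > 0 and M > 0, and let Λ be a nonnegative real random variable with E[Λ] = 1 and E[e^{−MΛ}] ≤ e^{−6g}. Then P[ λ̲ ≤ Λ ≤ λ̄ ] ≥ χ, where λ̲ = g/M, λ̄ = 2/(1 − e^{−5g}), and χ = (1 − e^{−5g})/2. -/

import Mathlib

open Real MeasureTheory

/-- **Bounding the scaling factor.** Let `Λ ≥ 0` be a real
random variable with `E[Λ] = 1` and `E[e^{-MΛ}] ≤ e^{-6g}` (`g, M > 0`).
Then `P[g/M ≤ Λ ≤ 2/(1-e^{-5g})] ≥ (1-e^{-5g})/2`. -/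
theorem scaling_factor_bounded
    {Ω : Type*} [MeasureSpace Ω] [IsProbabilityMeasure (volume : Measure Ω)]
    (Λ : Ω → ℝ) (hmeas : Measurable Λ) (hnonneg : ∀ ω, 0 ≤ Λ ω)
    (hint : Integrable Λ) (hmean : ∫ ω, Λ ω = 1)
    (g M : ℝ) (hg : 0 < g) (hM : 0 < M)
    (hlap : ∫ ω, exp (-(M * Λ ω)) ≤ exp (-(6 * g))) :
    (1 - exp (-(5 * g))) / 2 ≤
      (volume {ω | g / M ≤ Λ ω ∧ Λ ω ≤ 2 / (1 - exp (-(5 * g)))}).toReal := by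
  set μ : Measure Ω := volume with hμ
  have hden : 0 < 1 - exp (-(5 * g)) := by
    have h1 : exp (-(5 * g)) < 1 := by
      rw [exp_lt_one_iff]; linarith
    linarith
  set lam : ℝ := 2 / (1 - exp (-(5 * g))) with hlam
  have hlampos : 0 < lam := by positivity
  set S : Set Ω := {ω | g / M ≤ Λ ω ∧ Λ ω ≤ lam} with hSdef
  set A : Set Ω := {ω | Λ ω < g / M} with hAdef
  set B : Set Ω := {ω | lam < Λ ω} with hBdef
  have hAm : MeasurableSet A := measurableSet_lt hmeas measurable_const
  have hBm : MeasurableSet B := measurableSet_lt measurable_const hmeas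
  have hSm : MeasurableSet S :=
    (measurableSet_le measurable_const hmeas).inter
      (measurableSet_le hmeas measurable_const)
  have hfmeas : Measurable fun ω => exp (-(M * Λ ω)) :=
    ((measurable_const.mul hmeas).neg).exp
  have hfint : Integrable (fun ω => exp (-(M * Λ ω))) μ := by
    refine (integrable_const (1 : ℝ)).mono' hfmeas.aestronglyMeasurable ?_
    filter_upwards with ω
    rw [Real.norm_eq_abs, abs_of_nonneg (exp_nonneg _)]
    refine exp_le_one_iff.mpr ?_
    nlinarith [hnonneg ω]
  -- bound on A
  have hAbound : (μ A).toReal ≤ exp (-(5 * g)) := by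
    have h1 : exp (-g) * (μ A).toReal ≤ ∫ ω in A, exp (-(M * Λ ω)) ∂μ := by
      apply setIntegral_ge_of_const_le_real hAm (measure_ne_top μ A)
      · intro x hx
        apply exp_le_exp.mpr
        have hx' : Λ x < g / M := hx
        have : M * Λ x < g := by
          have h := (lt_div_iff₀ hM).mp hx'
          nlinarith
        linarith
      · exact hfint.integrableOn
    have h2 : ∫ ω in A, exp (-(M * Λ ω)) ∂μ ≤ ∫ ω, exp (-(M * Λ ω)) ∂μ :=
      setIntegral_le_integral hfint (by filter_upwards with ω using exp_nonneg _)
    have h3 : exp (-g) * (μ A).toReal ≤ exp (-(6 * g)) :=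
      le_trans h1 (le_trans h2 hlap)
    have h4 : exp (-(6 * g)) = exp (-(5 * g)) * exp (-g) := by
      rw [← exp_add]; ring_nf
    nlinarith [exp_pos (-g)]
  -- bound on B (Markov)
  have hBbound : (μ B).toReal ≤ (1 - exp (-(5 * g))) / 2 := by
    have hmar := mul_meas_ge_le_integral_of_nonneg
      (μ := μ) (f := Λ) (by filter_upwards with ω using hnonneg ω) hint lam
    rw [hmean] at hmar
    have hsub : μ B ≤ μ {x | lam ≤ Λ x} :=
      measure_mono (fun x (hx : lam < Λ x) => (le_of_lt hx : lam ≤ Λ x))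
    have htr : (μ B).toReal ≤ (μ {x | lam ≤ Λ x}).toReal :=
      ENNReal.toReal_mono (measure_ne_top _ _) hsub
    have hm : (μ {x | lam ≤ Λ x}).toReal ≤ 1 / lam := by
      rw [le_div_iff₀ hlampos]
      rw [mul_comm]; exact hmar
    have hlam' : 1 / lam = (1 - exp (-(5 * g))) / 2 := by
      rw [hlam, one_div_div]
    linarith
  -- combine
  have hcompl : Sᶜ ⊆ A ∪ B := by
    intro x hx
    simp only [hSdef, hAdef, hBdef, Set.mem_compl_iff, Set.mem_setOf_eq,
      Set.mem_union, not_and_or, not_le] at hx ⊢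
    exact hx
  have hle : (μ Sᶜ).toReal ≤ (μ A).toReal + (μ B).toReal := by
    have h := (measure_mono hcompl).trans (measure_union_le (μ := μ) A B)
    calc (μ Sᶜ).toReal ≤ (μ A + μ B).toReal :=
          ENNReal.toReal_mono (ENNReal.add_ne_top.mpr ⟨measure_ne_top _ _, measure_ne_top _ _⟩) h
      _ = (μ A).toReal + (μ B).toReal :=
          ENNReal.toReal_add (measure_ne_top _ _) (measure_ne_top _ _)
  have hsum : (μ S).toReal + (μ Sᶜ).toReal = 1 := by
    have h := measure_add_measure_compl (μ := μ) hSm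
    rw [measure_univ] at h
    have := congrArg ENNReal.toReal h
    rwa [ENNReal.toReal_add (measure_ne_top _ _) (measure_ne_top _ _),
      ENNReal.toReal_one] at this
  linarith
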